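/- For all natural numbers u, r, s with u ≤ s, and for each choice of sign ε ∈ {+1, −1}, the following identity holds in K: [s−u choose r] = ∑_{p=0}^{r} (−1)^p · v^{ε(p(s−u−r+1) + ru)} · [u choose p] · [s−p choose r−p]. -/

import Mathlib

open PowerSeries Finset

noncomputable section

/-- The base field `K = ℚ(v)`. -/
abbrev K : Type := RatFunc ℚ

/-- The indeterminate `v` of `K = ℚ(v)`. -/
noncomputable def v : K := RatFunc.X

/-- The quantum integer `[m] = (v^m - v^{-m})/(v - v⁻¹)`. -/
noncomputable def qint (m : ℤ) : K := (v ^ m - v ^ (-m)) / (v - v⁻¹)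

/-- The quantum factorial `[n]! = [n][n-1]⋯[1]`. -/
noncomputable def qfact (n : ℕ) : K := ∏ i ∈ Finset.range n, qint (i + 1)

/-- The quantum binomial coefficient `[m choose n]`. -/
noncomputable def qbinom (m n : ℤ) : K :=
  if 0 ≤ n ∧ n ≤ m then qfact m.toNat / (qfact n.toNat * qfact (m - n).toNat) else 0

/-- The ring `R = K[[X]]`. -/
abbrev R : Type := PowerSeries K

/-- `T = 1 + X`, a unit of `R`. -/
noncomputable def T : R := 1 + PowerSeries.X

/-- `T⁻¹`, the inverse of the unit `T` in `R`. -/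
noncomputable def Tinv : R := Ring.inverse T

/-- `[T;r] = (v^r T - v^{-r} T⁻¹)/(v - v⁻¹)`. -/
noncomputable def bT (r : ℤ) : R :=
  (PowerSeries.C : K →+* R) ((v - v⁻¹)⁻¹) *
    ((PowerSeries.C : K →+* R) (v ^ r) * T - (PowerSeries.C : K →+* R) (v ^ (-r)) * Tinv)

/-- `[T⁻¹;r] = (v^r T⁻¹ - v^{-r} T)/(v - v⁻¹)`. -/
noncomputable def bTinv (r : ℤ) : R :=
  (PowerSeries.C : K →+* R) ((v - v⁻¹)⁻¹) *
    ((PowerSeries.C : K →+* R) (v ^ r) * Tinv - (PowerSeries.C : K →+* R) (v ^ (-r)) * T)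

/-- `[T;r]_{(j)} = [T;r][T;r-1]⋯[T;r-j+1]`. -/
noncomputable def bTdesc (r : ℤ) (j : ℕ) : R := ∏ i ∈ Finset.range j, bT (r - i)

/-- `[T;r]^{(j)} = [T;r+1][T;r+2]⋯[T;r+j]`. -/
noncomputable def bTasc (r : ℤ) (j : ℕ) : R := ∏ i ∈ Finset.range j, bT (r + 1 + i)

/-- `[T⁻¹;r]_{(j)} = [T⁻¹;r][T⁻¹;r-1]⋯[T⁻¹;r-j+1]`. -/
noncomputable def bTinvDesc (r : ℤ) (j : ℕ) : R := ∏ i ∈ Finset.range j, bTinv (r - i)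

lemma v_ne_zero : v ≠ 0 := RatFunc.X_ne_zero

lemma vpow_ne_one (n : ℤ) (hn : n ≠ 0) : v ^ n ≠ 1 := by
  intro h
  wlog hpos : 0 < n generalizing n
  · exact this (-n) (by omega) (by rw [zpow_neg, h, inv_one]) (by omega)
  have h2 : v ^ n.toNat = 1 := by
    rw [← zpow_natCast, Int.toNat_of_nonneg hpos.le, h]
  have h3 : (RatFunc.X : K) ^ n.toNat = 1 := h2
  rw [← RatFunc.algebraMap_X, ← map_pow, ← map_one (algebraMap (Polynomial ℚ) K)] at h3
  have := RatFunc.algebraMap_injective ℚ h3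
  have := congrArg Polynomial.natDegree this
  simp [Polynomial.natDegree_X_pow] at this
  omega

lemma vv_ne_zero : v - v⁻¹ ≠ 0 := by
  intro h
  have : v * v - 1 = 0 := by
    have := congrArg (· * v) h
    simp only [sub_mul, inv_mul_cancel₀ v_ne_zero, zero_mul] at this
    exact this
  have : v ^ (2:ℤ) = 1 := by rw [zpow_two]; linear_combination this
  exact vpow_ne_one 2 (by norm_num) this

lemma qint_ne_zero (m : ℤ) (h : 0 < m) : qint m ≠ 0 := by
  apply div_ne_zero _ vv_ne_zero
  intro hh
  have : v ^ m = v ^ (-m) := by linear_combination hh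
  have h2 : v ^ (2*m) = 1 := by
    have := congrArg (· * v ^ m) this
    simp only [← zpow_add₀ v_ne_zero] at this
    simpa [two_mul] using this
  exact vpow_ne_one (2*m) (by omega) h2

lemma qfact_ne_zero (n : ℕ) : qfact n ≠ 0 := by
  apply Finset.prod_ne_zero_iff.2
  intro i _
  exact qint_ne_zero _ (by positivity)

lemma qfact_succ (n : ℕ) : qfact (n+1) = qfact n * qint (n+1) := by
  rw [qfact, Finset.prod_range_succ]; rfl

lemma qint_key (ε : ℤ) (hε : ε = 1 ∨ ε = -1) (x y : ℤ) :
    qint (x + y) = v ^ (ε*x) * qint y + v ^ (ε*(-y)) * qint x := by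
  have hv := v_ne_zero
  rcases hε with h | h <;> subst h <;>
  · simp only [qint, one_mul, neg_mul, neg_neg, ← mul_div_assoc, ← add_div]
    congr 1
    simp only [mul_sub, ← zpow_add₀ hv]
    ring_nf

lemma qbinom_eq (m n : ℕ) (h : n ≤ m) :
    qbinom m n = qfact m / (qfact n * qfact (m - n)) := by
  have h1 : ((m:ℤ) - n).toNat = m - n := by omega
  simp [qbinom, Int.ofNat_le.2 h, h1]

lemma qbinom_neg {m n : ℤ} (h : n < 0) : qbinom m n = 0 := by
  simp [qbinom]; omega

lemma qbinom_gt {m n : ℤ} (h : m < n) : qbinom m n = 0 := by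
  simp [qbinom]; omega

lemma qfact_zero : qfact 0 = 1 := by simp [qfact]

lemma qbinom_zero {m : ℤ} (h : 0 ≤ m) : qbinom m 0 = 1 := by
  simp [qbinom, h, qfact_zero, div_self (qfact_ne_zero m.toNat)]

lemma qbinom_self (m : ℕ) : qbinom m m = 1 := by
  rw [qbinom_eq m m le_rfl]
  simp [qfact_zero, div_self (qfact_ne_zero m)]

lemma pascal (ε : ℤ) (hε : ε = 1 ∨ ε = -1) (m : ℕ) (n : ℤ) :
    qbinom ((m:ℤ)+1) n =
      v ^ (ε*n) * qbinom m n + v ^ (ε*(n - m - 1)) * qbinom m (n-1) := by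
  rcases lt_or_ge n 0 with hn | hn
  · rw [qbinom_neg hn, qbinom_neg (by omega : n - 1 < 0), qbinom_neg hn]
    ring
  rcases eq_or_lt_of_le hn with hn0 | hn1
  · -- n = 0
    rw [← hn0]
    rw [qbinom_zero (by omega), qbinom_zero (by omega), qbinom_neg (by omega : (0:ℤ) - 1 < 0)]
    simp
  rcases lt_or_ge (m:ℤ) n with hnm | hnm
  · -- n > m : two subcases n = m+1 or n > m+1
    rcases eq_or_lt_of_le (by omega : (m:ℤ) + 1 ≤ n) with he | he
    · -- n = m + 1
      rw [← he, qbinom_gt (by omega : (m:ℤ) < (m:ℤ)+1)]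
      have h1 : ((m:ℤ)+1) - 1 = (m:ℤ) := by ring
      rw [h1, qbinom_self, show (m:ℤ)+1 = ((m+1:ℕ):ℤ) by push_cast; ring, qbinom_self]
      rw [show ε * (((m+1:ℕ):ℤ) - (m:ℤ) - 1) = 0 by push_cast; ring]
      simp
    · rw [qbinom_gt (by omega : (m:ℤ)+1 < n), qbinom_gt (by omega : (m:ℤ) < n),
        qbinom_gt (by omega : (m:ℤ) < n - 1)]
      ring
  · -- generic : 1 ≤ n ≤ m
    obtain ⟨j, rfl⟩ : ∃ j : ℕ, n = (j:ℤ) + 1 := ⟨(n-1).toNat, by omega⟩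
    have hj : j + 1 ≤ m := by omega
    have c3 : (j:ℤ) + 1 - 1 = (j : ℤ) := by ring
    rw [c3, show (m:ℤ)+1 = ((m+1:ℕ):ℤ) by push_cast; ring,
      show (j:ℤ)+1 = ((j+1:ℕ):ℤ) by push_cast; ring]
    rw [qbinom_eq (m+1) (j+1) (by omega), qbinom_eq m (j+1) hj, qbinom_eq m j (by omega)]
    have hq1 : qint ((j:ℤ)+1) ≠ 0 := qint_ne_zero _ (by omega)
    have hq2 : qint ((m:ℤ)-j) ≠ 0 := qint_ne_zero _ (by omega)
    have f1 : qfact (m+1) = qfact m *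
        (v ^ (ε*((j:ℤ)+1)) * qint ((m:ℤ)-j) + v ^ (ε*(-((m:ℤ)-j))) * qint ((j:ℤ)+1)) := by
      rw [qfact_succ]
      congr 1
      rw [show ((m:ℕ):ℤ)+1 = ((j:ℤ)+1)+((m:ℤ)-j) by ring, qint_key ε hε]
    have f2 : qfact (j+1) = qfact j * qint ((j:ℤ)+1) := qfact_succ j
    have f3 : qfact (m + 1 - (j+1)) = qfact (m-j-1) * qint ((m:ℤ)-j) := by
      rw [show m + 1 - (j+1) = (m-j-1)+1 by omega, qfact_succ,
        show ((m-j-1:ℕ):ℤ)+1 = (m:ℤ)-(j:ℤ) by omega]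
    have f4 : qfact (m - j) = qfact (m-j-1) * qint ((m:ℤ)-j) := by
      rw [show m - j = (m-j-1)+1 by omega, qfact_succ]
      rw [show ((m-j-1:ℕ):ℤ)+1 = (m:ℤ)-(j:ℤ) by omega, show m-j-1+1-1 = m-j-1 by omega]
    have f5 : m - (j+1) = m - j - 1 := by omega
    rw [f1, f2, f3, f4, f5]
    have e2 : ε * (((j+1:ℕ):ℤ) - m - 1) = ε*(-((m:ℤ)-j)) := by push_cast; ring
    have e1 : ε * ((j+1:ℕ):ℤ) = ε*((j:ℤ)+1) := by push_cast; ring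
    rw [e1, e2]
    field_simp [qfact_ne_zero]

/-- the `q`-binomial identity (1.160a of Ma). -/
theorem stmt5 (u r s : ℕ) (hus : u ≤ s) (ε : ℤ) (hε : ε = 1 ∨ ε = -1) :
    qbinom ((s : ℤ) - u) r =
      ∑ p ∈ Finset.range (r + 1),
        (-1 : K) ^ p * v ^ (ε * (p * ((s : ℤ) - u - r + 1) + (r : ℤ) * u)) *
          qbinom u p * qbinom ((s : ℤ) - p) ((r : ℤ) - p) := by
  induction u generalizing r s with
  | zero =>
    rw [Finset.sum_eq_single_of_mem 0 (Finset.mem_range.2 (by omega))]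
    · push_cast
      rw [qbinom_zero (by omega : (0:ℤ) ≤ 0)]
      ring_nf
      rw [zpow_zero, one_mul]
    · intro p hp hp0
      have h0 : qbinom ((0:ℕ):ℤ) (p:ℤ) = 0 :=
        qbinom_gt (by exact_mod_cast Nat.pos_of_ne_zero hp0)
      rw [h0]
      ring
  | succ u IH =>
    obtain _ | r := r
    · rw [Finset.sum_range_one]
      push_cast
      rw [qbinom_zero (by push_cast; omega : (0:ℤ) ≤ (s:ℤ) - ((u:ℤ)+1)),
        qbinom_zero (by omega : (0:ℤ) ≤ (u:ℤ)+1),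
        show qbinom ((s:ℤ)-0) 0 = 1 from by rw [sub_zero]; exact qbinom_zero (by omega)]
      ring_nf
      exact (zpow_zero v).symm
    · have hus' : u ≤ s - 1 := by omega
      have hs1 : ((s-1:ℕ):ℤ) = (s:ℤ) - 1 := by omega
      have IH1 := IH (r+1) s (by omega)
      push_cast at IH1
      have IH2 := IH r (s-1) hus'
      rw [hs1] at IH2
      push_cast
      have hv := v_ne_zero
      have hsplit : ∀ x : ℕ,
          (-1:K)^x * v ^ (ε * (↑x * ((s:ℤ) - (↑u + 1) - (↑r + 1) + 1) + (↑r + 1) * (↑u + 1))) *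
              qbinom (↑u + 1) ↑x * qbinom ((s:ℤ) - ↑x) (↑r + 1 - ↑x)
          = v ^ (ε * ((r:ℤ) + 1)) *
              ((-1:K)^x * v ^ (ε * (↑x * ((s:ℤ) - ↑u - (↑r + 1) + 1) + (↑r + 1) * ↑u)) *
                qbinom ↑u ↑x * qbinom ((s:ℤ) - ↑x) (↑r + 1 - ↑x))
            + (-1:K)^x * v ^ (ε * (↑x * ((s:ℤ) - (↑u + 1) - (↑r + 1) + 1) + (↑r + 1) * (↑u + 1))) *
                v ^ (ε * ((x:ℤ) - ↑u - 1)) * qbinom ↑u ((x:ℤ) - 1) *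
                qbinom ((s:ℤ) - ↑x) (↑r + 1 - ↑x) := by
        intro x
        have hA : v ^ (ε * ((x:ℤ) * ((s:ℤ) - (↑u + 1) - (↑r + 1) + 1) + (↑r + 1) * (↑u + 1))) *
              v ^ (ε * (x:ℤ))
            = v ^ (ε * ((r:ℤ) + 1)) *
              v ^ (ε * ((x:ℤ) * ((s:ℤ) - ↑u - (↑r + 1) + 1) + (↑r + 1) * ↑u)) := by
          rw [← zpow_add₀ hv, ← zpow_add₀ hv]; congr 1; ring
        rw [pascal ε hε u (x:ℤ)]
        linear_combination ((-1:K)^x * qbinom ↑u ↑x * qbinom ((s:ℤ) - ↑x) ((r:ℤ) + 1 - ↑x)) * hA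
      have hB0 : (-1:K)^0 * v ^ (ε * (((0:ℕ):ℤ) * ((s:ℤ) - (↑u + 1) - (↑r + 1) + 1) + (↑r + 1) * (↑u + 1))) *
          v ^ (ε * (((0:ℕ):ℤ) - ↑u - 1)) * qbinom ↑u (((0:ℕ):ℤ) - 1) *
          qbinom ((s:ℤ) - ((0:ℕ):ℤ)) (↑r + 1 - ((0:ℕ):ℤ)) = 0 := by
        rw [qbinom_neg (show ((0:ℕ):ℤ) - 1 < 0 by norm_num)]; ring
      have hBs : ∀ q : ℕ,
          (-1:K)^(q+1) * v ^ (ε * ((↑(q+1):ℤ) * ((s:ℤ) - (↑u + 1) - (↑r + 1) + 1) + (↑r + 1) * (↑u + 1))) *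
              v ^ (ε * ((↑(q+1):ℤ) - ↑u - 1)) * qbinom ↑u ((↑(q+1):ℤ) - 1) *
              qbinom ((s:ℤ) - ↑(q+1)) (↑r + 1 - ↑(q+1))
          = -(v ^ (ε * ((s:ℤ) - ↑u)) *
              ((-1:K)^q * v ^ (ε * ((q:ℤ) * ((s:ℤ) - 1 - ↑u - ↑r + 1) + ↑r * ↑u)) *
                qbinom ↑u ↑q * qbinom ((s:ℤ) - 1 - ↑q) ((r:ℤ) - ↑q))) := by
        intro q
        have hBe : v ^ (ε * (((q:ℤ)+1) * ((s:ℤ) - (↑u + 1) - (↑r + 1) + 1) + (↑r + 1) * (↑u + 1))) *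
              v ^ (ε * ((q:ℤ) + 1 - ↑u - 1))
            = v ^ (ε * ((s:ℤ) - ↑u)) *
              v ^ (ε * ((q:ℤ) * ((s:ℤ) - 1 - ↑u - ↑r + 1) + ↑r * ↑u)) := by
          rw [← zpow_add₀ hv, ← zpow_add₀ hv]; congr 1; ring
        push_cast
        rw [show ((q:ℤ) + 1 - 1) = (q:ℤ) by ring,
          show ((s:ℤ) - ((q:ℤ) + 1)) = (s:ℤ) - 1 - ↑q by ring,
          show ((r:ℤ) + 1 - ((q:ℤ) + 1)) = (r:ℤ) - ↑q by ring]
        linear_combination ((-1:K)^(q+1) * qbinom ↑u ↑q * qbinom ((s:ℤ) - 1 - ↑q) ((r:ℤ) - ↑q)) * hBe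
      have hBsum : (∑ x ∈ Finset.range (r+1+1),
            (-1:K)^x * v ^ (ε * (↑x * ((s:ℤ) - (↑u + 1) - (↑r + 1) + 1) + (↑r + 1) * (↑u + 1))) *
              v ^ (ε * ((x:ℤ) - ↑u - 1)) * qbinom ↑u ((x:ℤ) - 1) *
              qbinom ((s:ℤ) - ↑x) (↑r + 1 - ↑x))
          = -(∑ q ∈ Finset.range (r+1), v ^ (ε * ((s:ℤ) - ↑u)) *
              ((-1:K)^q * v ^ (ε * ((q:ℤ) * ((s:ℤ) - 1 - ↑u - ↑r + 1) + ↑r * ↑u)) *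
                qbinom ↑u ↑q * qbinom ((s:ℤ) - 1 - ↑q) ((r:ℤ) - ↑q))) := by
        rw [Finset.sum_range_succ', hB0, add_zero, ← Finset.sum_neg_distrib]
        exact Finset.sum_congr rfl (fun q _ => hBs q)
      have hε' : -ε = 1 ∨ -ε = -1 := by rcases hε with h | h <;> [right; left] <;> omega
      have key1 : qbinom ((s:ℤ) - 1 - ↑u) ((r:ℤ) + 1)
          = v ^ (ε * ((r:ℤ) + 1)) * qbinom ((s:ℤ) - ↑u) ((r:ℤ) + 1)
            - v ^ (ε * ((s:ℤ) - ↑u)) * qbinom ((s:ℤ) - 1 - ↑u) (r:ℤ) := by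
        have P2 := pascal (-ε) hε' (s-(u+1)) ((r:ℤ)+1)
        rw [show ((s-(u+1):ℕ):ℤ) = (s:ℤ) - 1 - ↑u by omega] at P2
        rw [show ((s:ℤ) - 1 - ↑u + 1) = (s:ℤ) - ↑u by ring] at P2
        rw [show ((r:ℤ) + 1 - 1) = (r:ℤ) by ring] at P2
        have h1 : v ^ (ε * ((r:ℤ)+1)) * v ^ (-ε * ((r:ℤ)+1)) = 1 := by
          rw [← zpow_add₀ hv, show ε * ((r:ℤ)+1) + -ε * ((r:ℤ)+1) = 0 by ring, zpow_zero]
        have h2 : v ^ (ε * ((r:ℤ)+1)) * v ^ (-ε * ((r:ℤ) + 1 - ((s:ℤ) - 1 - ↑u) - 1)) = v ^ (ε * ((s:ℤ) - ↑u)) := by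
          rw [← zpow_add₀ hv]; congr 1; ring
        linear_combination (-(v ^ (ε * ((r:ℤ)+1)))) * P2
          - qbinom ((s:ℤ) - 1 - ↑u) ((r:ℤ) + 1) * h1
          - qbinom ((s:ℤ) - 1 - ↑u) (r:ℤ) * h2
      calc qbinom ((s:ℤ) - (↑u + 1)) ((r:ℤ) + 1)
          = v ^ (ε * ((r:ℤ)+1)) * qbinom ((s:ℤ) - ↑u) ((r:ℤ)+1)
            + -(v ^ (ε * ((s:ℤ) - ↑u)) * qbinom ((s:ℤ) - 1 - ↑u) (r:ℤ)) := by
            rw [show (s:ℤ) - (↑u + 1) = (s:ℤ) - 1 - ↑u by ring]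
            linear_combination key1
        _ = (∑ x ∈ Finset.range (r+1+1), v ^ (ε * ((r:ℤ)+1)) *
              ((-1:K)^x * v ^ (ε * (↑x * ((s:ℤ) - ↑u - (↑r + 1) + 1) + (↑r + 1) * ↑u)) *
                qbinom ↑u ↑x * qbinom ((s:ℤ) - ↑x) (↑r + 1 - ↑x)))
            + -(∑ q ∈ Finset.range (r+1), v ^ (ε * ((s:ℤ) - ↑u)) *
              ((-1:K)^q * v ^ (ε * ((q:ℤ) * ((s:ℤ) - 1 - ↑u - ↑r + 1) + ↑r * ↑u)) *
                qbinom ↑u ↑q * qbinom ((s:ℤ) - 1 - ↑q) ((r:ℤ) - ↑q))) := by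
            rw [IH1, IH2, Finset.mul_sum, Finset.mul_sum]
        _ = (∑ x ∈ Finset.range (r+1+1), v ^ (ε * ((r:ℤ)+1)) *
              ((-1:K)^x * v ^ (ε * (↑x * ((s:ℤ) - ↑u - (↑r + 1) + 1) + (↑r + 1) * ↑u)) *
                qbinom ↑u ↑x * qbinom ((s:ℤ) - ↑x) (↑r + 1 - ↑x)))
            + (∑ x ∈ Finset.range (r+1+1),
              (-1:K)^x * v ^ (ε * (↑x * ((s:ℤ) - (↑u + 1) - (↑r + 1) + 1) + (↑r + 1) * (↑u + 1))) *
                v ^ (ε * ((x:ℤ) - ↑u - 1)) * qbinom ↑u ((x:ℤ) - 1) *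
                qbinom ((s:ℤ) - ↑x) (↑r + 1 - ↑x)) := by rw [hBsum]
        _ = ∑ x ∈ Finset.range (r+1+1),
              (v ^ (ε * ((r:ℤ)+1)) *
                ((-1:K)^x * v ^ (ε * (↑x * ((s:ℤ) - ↑u - (↑r + 1) + 1) + (↑r + 1) * ↑u)) *
                  qbinom ↑u ↑x * qbinom ((s:ℤ) - ↑x) (↑r + 1 - ↑x))
              + (-1:K)^x * v ^ (ε * (↑x * ((s:ℤ) - (↑u + 1) - (↑r + 1) + 1) + (↑r + 1) * (↑u + 1))) *
                  v ^ (ε * ((x:ℤ) - ↑u - 1)) * qbinom ↑u ((x:ℤ) - 1) *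
                  qbinom ((s:ℤ) - ↑x) (↑r + 1 - ↑x)) := Finset.sum_add_distrib.symm
        _ = ∑ x ∈ Finset.range (r+1+1),
              (-1:K)^x * v ^ (ε * (↑x * ((s:ℤ) - (↑u + 1) - (↑r + 1) + 1) + (↑r + 1) * (↑u + 1))) *
                qbinom (↑u + 1) ↑x * qbinom ((s:ℤ) - ↑x) (↑r + 1 - ↑x) :=
            Finset.sum_congr rfl (fun x _ => (hsplit x).symm)
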